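/- The sum over all 0 ≤ i, j ≤ ℓ-1 of the squares of the cyclotomic numbers (i, j) equals q + k(k-3), where k = (q-1)/ℓ. -/

import Mathlib

open Finset

namespace CycAux
variable {F : Type*} [Field F] [Fintype F]

lemma horder (g : Fˣ) (hg : ∀ x : Fˣ, x ∈ Subgroup.zpowers g) :
    orderOf g = Fintype.card F - 1 := by
  classical
  rw [orderOf_eq_card_of_forall_mem_zpowers hg, Nat.card_eq_fintype_card, Fintype.card_units]

lemma zpow_mem_iff (g : Fˣ) (ℓ : ℕ) (hg : ∀ x : Fˣ, x ∈ Subgroup.zpowers g)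
    (hℓ : ℓ ∣ Fintype.card F - 1) (m : ℤ) :
    g ^ m ∈ Subgroup.zpowers (g ^ ℓ) ↔ (ℓ : ℤ) ∣ m := by
  constructor
  · rintro ⟨t, ht⟩
    have ht : (g ^ ℓ) ^ t = g ^ m := ht
    have ht' : g ^ ((ℓ : ℤ) * t) = g ^ m := by
      rw [← ht, ← zpow_natCast g ℓ, ← zpow_mul]
    rw [zpow_eq_zpow_iff_modEq] at ht'
    have hdvd : (↑(orderOf g) : ℤ) ∣ (ℓ : ℤ) * t - m := Int.ModEq.dvd ht'.symm
    have h2 : (ℓ : ℤ) ∣ (ℓ : ℤ) * t - m := by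
      refine dvd_trans ?_ hdvd
      rw [horder g hg]
      exact_mod_cast Int.natCast_dvd_natCast.mpr hℓ
    have := dvd_sub (Dvd.intro t rfl) h2
    simpa using this
  · rintro ⟨c, rfl⟩
    exact ⟨c, show (g ^ ℓ) ^ c = _ by rw [← zpow_natCast g ℓ, ← zpow_mul]⟩

lemma mem_K_iff (g : Fˣ) (ℓ : ℕ) (hg : ∀ x : Fˣ, x ∈ Subgroup.zpowers g) (u : Fˣ) :
    u ∈ Subgroup.zpowers (g ^ ℓ) ↔ ∃ y : Fˣ, y ^ ℓ = u := by
  constructor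
  · rintro ⟨t, ht⟩
    have ht : (g ^ ℓ) ^ t = u := ht
    subst ht
    exact ⟨g ^ t, by rw [← zpow_natCast (g ^ t) ℓ, ← zpow_mul, ← zpow_natCast g ℓ, ← zpow_mul, mul_comm]⟩
  · rintro ⟨y, rfl⟩
    obtain ⟨t, rfl⟩ := hg y
    exact ⟨t, show (g ^ ℓ) ^ t = _ by
      rw [← zpow_natCast g ℓ, ← zpow_mul, ← zpow_natCast (g^t) ℓ, ← zpow_mul, mul_comm]⟩

lemma card_K (g : Fˣ) (ℓ : ℕ) (hg : ∀ x : Fˣ, x ∈ Subgroup.zpowers g)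
    (hℓ : ℓ ∣ Fintype.card F - 1) :
    Nat.card (Subgroup.zpowers (g ^ ℓ)) = (Fintype.card F - 1) / ℓ := by
  rw [Nat.card_zpowers, orderOf_pow, horder g hg, Nat.gcd_eq_right hℓ]

/-- every unit lies in some coset `g^j K` with `j < ℓ`. -/
lemma exists_coset (g : Fˣ) (ℓ : ℕ) (hg : ∀ x : Fˣ, x ∈ Subgroup.zpowers g) (hℓ0 : 0 < ℓ)
    (u : Fˣ) : ∃ j < ℓ, ∃ z : Fˣ, u = g ^ (j : ℤ) * z ^ ℓ := by
  obtain ⟨t, rfl⟩ := hg u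
  refine ⟨(t % ℓ).toNat, ?_, g ^ (t / ℓ), ?_⟩
  · have h1 : t % ℓ < ℓ := Int.emod_lt_of_pos t (by exact_mod_cast hℓ0)
    omega
  · have h0 : (((t % ℓ).toNat : ℤ)) = t % ℓ := Int.toNat_of_nonneg (Int.emod_nonneg t (by positivity))
    rw [h0, ← zpow_natCast (g ^ (t/ℓ)) ℓ, ← zpow_mul, ← zpow_add]
    congr 1
    rw [mul_comm]
    exact (Int.emod_add_mul_ediv t ℓ).symm

end CycAux

namespace CycAux2
open CycAux
variable {F : Type*} [Field F] [Fintype F]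

open Classical in
noncomputable def Aset (g : Fˣ) (ℓ : ℕ) (i j : ℤ) : Finset F :=
  univ.filter (fun x => (∃ y : Fˣ, x = 1 + ((g ^ i : Fˣ) : F) * (y : F) ^ ℓ) ∧
    ∃ z : Fˣ, x = ((g ^ j : Fˣ) : F) * (z : F) ^ ℓ)

lemma mem_Aset {g : Fˣ} {ℓ : ℕ} {i j : ℤ} {x : F} :
    x ∈ Aset g ℓ i j ↔ (∃ y : Fˣ, x = 1 + ((g ^ i : Fˣ) : F) * (y : F) ^ ℓ) ∧
      ∃ z : Fˣ, x = ((g ^ j : Fˣ) : F) * (z : F) ^ ℓ := by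
  simp [Aset]

open Classical in
noncomputable def KF (F : Type*) [Field F] [Fintype F] (ℓ : ℕ) : Finset F :=
  univ.image (fun y : Fˣ => (y : F) ^ ℓ)

lemma mem_KF {ℓ : ℕ} {c : F} : c ∈ KF F ℓ ↔ ∃ y : Fˣ, (y : F) ^ ℓ = c := by
  simp [KF]

lemma pow_mem_KF (ℓ : ℕ) (y : Fˣ) : (y : F) ^ ℓ ∈ KF F ℓ := mem_KF.mpr ⟨y, rfl⟩

lemma one_mem_KF (ℓ : ℕ) : (1 : F) ∈ KF F ℓ := mem_KF.mpr ⟨1, by simp⟩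

lemma ne_zero_of_mem_KF {ℓ : ℕ} {c : F} (hc : c ∈ KF F ℓ) : c ≠ 0 := by
  obtain ⟨y, rfl⟩ := mem_KF.mp hc
  exact pow_ne_zero _ (Units.ne_zero y)

lemma div_mem_KF {ℓ : ℕ} {a b : F} (ha : a ∈ KF F ℓ) (hb : b ∈ KF F ℓ) :
    a / b ∈ KF F ℓ := by
  obtain ⟨y, rfl⟩ := mem_KF.mp ha
  obtain ⟨z, rfl⟩ := mem_KF.mp hb
  refine mem_KF.mpr ⟨y * z⁻¹, ?_⟩
  push_cast
  rw [mul_pow, inv_pow]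
  rw [div_eq_mul_inv]

lemma card_KF (g : Fˣ) (ℓ : ℕ) (hg : ∀ x : Fˣ, x ∈ Subgroup.zpowers g)
    (hℓ : ℓ ∣ Fintype.card F - 1) :
    (KF F ℓ).card = (Fintype.card F - 1) / ℓ := by
  classical
  have h1 : KF F ℓ = (univ.image (fun y : Fˣ => y ^ ℓ)).image (fun u : Fˣ => (u : F)) := by
    ext c
    simp [KF]
  rw [h1, Finset.card_image_of_injective _ (fun a b h => Units.ext h)]
  have h2 : (univ.image (fun y : Fˣ => y ^ ℓ)) = (Subgroup.zpowers (g ^ ℓ) : Set Fˣ).toFinset := by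
    ext u
    simp [mem_K_iff g ℓ hg u]
  rw [h2, Set.toFinset_card, ← Nat.card_eq_fintype_card, SetLike.coe_sort_coe, card_K g ℓ hg hℓ]

open Classical in
noncomputable def Sfin (F : Type*) [Field F] [Fintype F] (ℓ : ℕ) : Finset (F × F) :=
  univ.filter (fun p => p.2 ≠ 0 ∧ p.2 ≠ 1 ∧ (∃ α ∈ KF F ℓ, p.1 - 1 = α * (p.2 - 1)) ∧
    ∃ β ∈ KF F ℓ, p.1 = β * p.2)

lemma mem_Sfin {ℓ : ℕ} {p : F × F} : p ∈ Sfin F ℓ ↔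
    p.2 ≠ 0 ∧ p.2 ≠ 1 ∧ (∃ α ∈ KF F ℓ, p.1 - 1 = α * (p.2 - 1)) ∧
    ∃ β ∈ KF F ℓ, p.1 = β * p.2 := by
  simp only [Sfin, Finset.mem_filter, Finset.mem_univ, true_and]

lemma coset_eq (g : Fˣ) (ℓ : ℕ) (hg : ∀ x : Fˣ, x ∈ Subgroup.zpowers g)
    (hℓ : ℓ ∣ Fintype.card F - 1) {i i' : ℕ} (hi : i < ℓ) (hi' : i' < ℓ) {y y' : Fˣ}
    (h : g ^ (i : ℤ) * y ^ ℓ = g ^ (i' : ℤ) * y' ^ ℓ) : i = i' := by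
  have key : g ^ ((i : ℤ) - (i' : ℤ)) = (y' / y) ^ ℓ := by
    rw [zpow_sub, div_pow, ← div_eq_mul_inv, div_eq_div_iff_mul_eq_mul]
    exact h.trans (mul_comm _ _)
  have hK : g ^ ((i : ℤ) - (i' : ℤ)) ∈ Subgroup.zpowers (g ^ ℓ) :=
    (mem_K_iff g ℓ hg _).mpr ⟨y' / y, key.symm⟩
  have hdvd := (zpow_mem_iff g ℓ hg hℓ _).mp hK
  have h2 : ℓ ∣ ((i : ℤ) - (i' : ℤ)).natAbs := Int.natCast_dvd.mp hdvd
  have h3 : ((i : ℤ) - (i' : ℤ)).natAbs < ℓ := by omega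
  have := Nat.eq_zero_of_dvd_of_lt h2 h3
  omega

end CycAux2

namespace CycAux3
open CycAux CycAux2
variable {F : Type*} [Field F] [Fintype F]

lemma unit_eq_of_coe {ℓ : ℕ} {g : Fˣ} {i i' : ℤ} {y y' : Fˣ}
    (h : ((g ^ i : Fˣ) : F) * (y : F) ^ ℓ = ((g ^ i' : Fˣ) : F) * (y' : F) ^ ℓ) :
    g ^ i * y ^ ℓ = g ^ i' * y' ^ ℓ := by
  apply Units.ext
  push_cast at h ⊢
  exact h

open Classical in
lemma Sfin_eq_biUnion (g : Fˣ) (ℓ : ℕ) (hg : ∀ x : Fˣ, x ∈ Subgroup.zpowers g)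
    (hℓ : ℓ ∣ Fintype.card F - 1) (hℓ0 : 0 < ℓ) :
    Sfin F ℓ = (Finset.range ℓ ×ˢ Finset.range ℓ).biUnion
      (fun q => Aset g ℓ (q.1 : ℤ) (q.2 : ℤ) ×ˢ Aset g ℓ (q.1 : ℤ) (q.2 : ℤ)) := by
  classical
  ext p
  simp only [Finset.mem_biUnion, Finset.mem_product, Finset.mem_range, mem_Sfin, mem_Aset]
  constructor
  · rintro ⟨h0, h1, ⟨α, hα, hA⟩, β, hβ, hB⟩
    obtain ⟨v, rfl⟩ := mem_KF.mp hα
    obtain ⟨w, rfl⟩ := mem_KF.mp hβ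
    obtain ⟨j, hj, z, hz⟩ := exists_coset g ℓ hg hℓ0 (Units.mk0 p.2 h0)
    obtain ⟨i, hi, y, hy⟩ := exists_coset g ℓ hg hℓ0 (Units.mk0 (p.2 - 1) (sub_ne_zero.mpr h1))
    have hz' : p.2 = ((g ^ (j : ℤ) : Fˣ) : F) * (z : F) ^ ℓ := by
      have := congrArg (fun u : Fˣ => (u : F)) hz
      simpa using this
    have hy' : p.2 - 1 = ((g ^ (i : ℤ) : Fˣ) : F) * (y : F) ^ ℓ := by
      have := congrArg (fun u : Fˣ => (u : F)) hy
      simpa using this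
    refine ⟨(i, j), ⟨hi, hj⟩, ⟨⟨y * v, ?_⟩, ⟨z * w, ?_⟩⟩, ⟨⟨y, ?_⟩, ⟨z, ?_⟩⟩⟩
    · have : p.1 - 1 = ((g ^ (i : ℤ) : Fˣ) : F) * ((y : F) * (v : F)) ^ ℓ := by
        rw [hA, hy', mul_pow]; ring
      rw [Units.val_mul]
      linear_combination this
    · have : p.1 = ((g ^ (j : ℤ) : Fˣ) : F) * ((z : F) * (w : F)) ^ ℓ := by
        rw [hB, hz', mul_pow]; ring
      rw [Units.val_mul]
      exact this
    · rw [← hy']; ring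
    · exact hz'
  · rintro ⟨⟨i, j⟩, ⟨hi, hj⟩, ⟨⟨y, hy⟩, ⟨z, hz⟩⟩, ⟨⟨y', hy'⟩, ⟨z', hz'⟩⟩⟩
    have hy'0 : (y' : F) ^ ℓ ≠ 0 := pow_ne_zero _ (Units.ne_zero y')
    have hz'0 : (z' : F) ^ ℓ ≠ 0 := pow_ne_zero _ (Units.ne_zero z')
    have hgI : ((g ^ (i : ℤ) : Fˣ) : F) ≠ 0 := Units.ne_zero _
    have hgJ : ((g ^ (j : ℤ) : Fˣ) : F) ≠ 0 := Units.ne_zero _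
    refine ⟨?_, ?_, ⟨(y : F) ^ ℓ / (y' : F) ^ ℓ, div_mem_KF (pow_mem_KF ℓ y) (pow_mem_KF ℓ y'), ?_⟩,
      ⟨(z : F) ^ ℓ / (z' : F) ^ ℓ, div_mem_KF (pow_mem_KF ℓ z) (pow_mem_KF ℓ z'), ?_⟩⟩
    · rw [hz']
      exact mul_ne_zero hgJ hz'0
    · intro hcontra
      have : ((g ^ (i : ℤ) : Fˣ) : F) * (y' : F) ^ ℓ = 0 := by
        linear_combination hcontra - hy'
      exact (mul_ne_zero hgI hy'0) this
    · rw [hy, hy']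
      field_simp
      ring
    · rw [hz, hz']
      field_simp

lemma blocks_disjoint (g : Fˣ) (ℓ : ℕ) (hg : ∀ x : Fˣ, x ∈ Subgroup.zpowers g)
    (hℓ : ℓ ∣ Fintype.card F - 1) :
    ∀ q1 ∈ Finset.range ℓ ×ˢ Finset.range ℓ, ∀ q2 ∈ Finset.range ℓ ×ˢ Finset.range ℓ, q1 ≠ q2 →
      Disjoint (Aset g ℓ (q1.1 : ℤ) (q1.2 : ℤ) ×ˢ Aset g ℓ (q1.1 : ℤ) (q1.2 : ℤ))
        (Aset g ℓ (q2.1 : ℤ) (q2.2 : ℤ) ×ˢ Aset g ℓ (q2.1 : ℤ) (q2.2 : ℤ)) := by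
  classical
  rintro ⟨i, j⟩ hq1 ⟨i', j'⟩ hq2 hne
  simp only [Finset.mem_product, Finset.mem_range] at hq1 hq2
  rw [Finset.disjoint_left]
  rintro ⟨x1, x2⟩ hp1 hp2
  rw [Finset.mem_product] at hp1 hp2
  obtain ⟨⟨y, hy⟩, ⟨z, hz⟩⟩ := mem_Aset.mp hp1.2
  obtain ⟨⟨y', hy'⟩, ⟨z', hz'⟩⟩ := mem_Aset.mp hp2.2
  have hijeq : i = i' ∧ j = j' := by
    constructor
    · have hcoe : ((g ^ (i:ℤ) : Fˣ) : F) * (y : F) ^ ℓ =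
          ((g ^ (i':ℤ) : Fˣ) : F) * (y' : F) ^ ℓ := by linear_combination hy' - hy
      exact coset_eq g ℓ hg hℓ hq1.1 hq2.1 (unit_eq_of_coe hcoe)
    · have hcoe : ((g ^ (j:ℤ) : Fˣ) : F) * (z : F) ^ ℓ =
          ((g ^ (j':ℤ) : Fˣ) : F) * (z' : F) ^ ℓ := hz.symm.trans hz'
      exact coset_eq g ℓ hg hℓ hq1.2 hq2.2 (unit_eq_of_coe hcoe)
  exact hne (by simp [hijeq.1, hijeq.2])

end CycAux3

namespace CycAux4
open CycAux CycAux2 CycAux3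
variable {F : Type*} [Field F] [Fintype F]

open Classical in
lemma card_Sdiag (ℓ : ℕ) :
    ((Sfin F ℓ).filter (fun p => p.1 = p.2)).card = Fintype.card F - 2 := by
  classical
  have himg : (Sfin F ℓ).filter (fun p => p.1 = p.2) =
      (Finset.univ \ {0, 1}).image (fun x : F => (x, x)) := by
    ext p
    simp only [Finset.mem_filter, mem_Sfin, Finset.mem_image, Finset.mem_sdiff,
      Finset.mem_univ, Finset.mem_insert, Finset.mem_singleton, true_and]
    constructor
    · rintro ⟨⟨h0, h1, _⟩, heq⟩
      exact ⟨p.2, by tauto, by rw [Prod.ext_iff]; exact ⟨heq.symm, rfl⟩⟩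
    · rintro ⟨x, hx, rfl⟩
      push_neg at hx
      exact ⟨⟨hx.1, hx.2, ⟨1, one_mem_KF ℓ, by ring⟩, ⟨1, one_mem_KF ℓ, by ring⟩⟩, rfl⟩
  rw [himg, Finset.card_image_of_injective _ (fun a b h => (Prod.ext_iff.mp h).1),
    Finset.card_sdiff_of_subset (Finset.subset_univ _), Finset.card_univ]
  congr 1
  rw [Finset.card_insert_of_notMem (by simp), Finset.card_singleton]

open Classical in
lemma card_Soff (ℓ : ℕ) :
    ((Sfin F ℓ).filter (fun p => ¬ p.1 = p.2)).card = (((KF F ℓ).erase 1).offDiag).card := by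
  classical
  apply Finset.card_bij' (i := fun (p : F × F) _ => ((p.1 - 1) / (p.2 - 1), p.1 / p.2))
    (j := fun (a : F × F) _ => (a.2 * ((1 - a.1) / (a.2 - a.1)), (1 - a.1) / (a.2 - a.1)))
  · -- maps into offDiag
    rintro ⟨x, x'⟩ hp
    rw [Finset.mem_filter, mem_Sfin] at hp
    obtain ⟨⟨h0, h1, ⟨α, hαK, hα⟩, β, hβK, hβ⟩, hne⟩ := hp
    simp only at h0 h1 hα hβ hne
    have h1' : x' - 1 ≠ 0 := sub_ne_zero.mpr h1
    have e1 : (x - 1) / (x' - 1) = α := by rw [hα]; field_simp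
    have e2 : x / x' = β := by rw [hβ]; field_simp
    rw [Finset.mem_offDiag]
    refine ⟨Finset.mem_erase.mpr ⟨?_, by dsimp only; rw [e1]; exact hαK⟩,
      Finset.mem_erase.mpr ⟨?_, by dsimp only; rw [e2]; exact hβK⟩, ?_⟩
    · dsimp only; rw [e1]; intro ha; exact hne (by rw [ha, one_mul] at hα; linear_combination hα)
    · dsimp only; rw [e2]; intro hb; exact hne (by rw [hb, one_mul] at hβ; exact hβ)
    · dsimp only; rw [e1, e2]
      intro hcon
      have h : β * x' - 1 = β * (x' - 1) := by
        rw [hβ, hcon] at hα; exact hα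
      have hb1 : β = 1 := by linear_combination h
      exact hne (by rw [hβ, hb1, one_mul])
  · -- j maps into Soff
    rintro ⟨α, β⟩ ha
    rw [Finset.mem_offDiag] at ha
    obtain ⟨hαe, hβe, hab⟩ := ha
    obtain ⟨hα1, hαK⟩ := Finset.mem_erase.mp hαe
    obtain ⟨hβ1, hβK⟩ := Finset.mem_erase.mp hβe
    simp only at hα1 hβ1 hab ⊢
    have hβα : β - α ≠ 0 := sub_ne_zero.mpr (Ne.symm hab)
    have h1α : (1 : F) - α ≠ 0 := sub_ne_zero.mpr (Ne.symm hα1)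
    have hX0 : (1 - α) / (β - α) ≠ 0 := div_ne_zero h1α hβα
    rw [Finset.mem_filter, mem_Sfin]
    refine ⟨⟨hX0, ?_, ⟨α, hαK, by field_simp; ring⟩, ⟨β, hβK, rfl⟩⟩, ?_⟩
    · intro h
      have h2 : (1 : F) - α = β - α := (div_eq_one_iff_eq hβα).mp h
      exact hβ1 (by linear_combination -h2)
    · intro h
      have h3 : (β - 1) * ((1 - α) / (β - α)) = 0 := by
        simp only at h
        linear_combination h
      rcases mul_eq_zero.mp h3 with h4 | h4
      · exact hβ1 (by linear_combination h4)
      · exact hX0 h4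
  · -- left inverse
    rintro ⟨x, x'⟩ hp
    rw [Finset.mem_filter, mem_Sfin] at hp
    obtain ⟨⟨h0, h1, _⟩, hne⟩ := hp
    simp only at h0 h1 hne ⊢
    have h1' : x' - 1 ≠ 0 := sub_ne_zero.mpr h1
    have hxx' : x' - x ≠ 0 := sub_ne_zero.mpr (Ne.symm hne)
    have hnum : 1 - (x - 1) / (x' - 1) = (x' - x) / (x' - 1) := by field_simp; ring
    have hden : x / x' - (x - 1) / (x' - 1) = (x' - x) / (x' * (x' - 1)) := by
      field_simp; ring
    have hX : (1 - (x - 1) / (x' - 1)) / (x / x' - (x - 1) / (x' - 1)) = x' := by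
      rw [hnum, hden, div_div_eq_mul_div]
      field_simp
    rw [Prod.mk.injEq]
    refine ⟨?_, hX⟩
    rw [hX]
    exact div_mul_cancel₀ x h0
  · -- right inverse
    rintro ⟨α, β⟩ ha
    rw [Finset.mem_offDiag] at ha
    obtain ⟨hαe, hβe, hab⟩ := ha
    obtain ⟨hα1, hαK⟩ := Finset.mem_erase.mp hαe
    obtain ⟨hβ1, hβK⟩ := Finset.mem_erase.mp hβe
    simp only at hα1 hβ1 hab ⊢
    have hβα : β - α ≠ 0 := sub_ne_zero.mpr (Ne.symm hab)
    have h1α : (1 : F) - α ≠ 0 := sub_ne_zero.mpr (Ne.symm hα1)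
    have h1β : (1 : F) - β ≠ 0 := sub_ne_zero.mpr (Ne.symm hβ1)
    have hX0 : (1 - α) / (β - α) ≠ 0 := div_ne_zero h1α hβα
    rw [Prod.mk.injEq]
    constructor
    · have hX1 : (1 - α) / (β - α) - 1 = (1 - β) / (β - α) := by field_simp; ring
      have hNum : β * ((1 - α) / (β - α)) - 1 = (α * (1 - β)) / (β - α) := by
        field_simp; ring
      rw [hNum, hX1, div_div_eq_mul_div]
      field_simp
    · exact mul_div_cancel_right₀ β hX0

end CycAux4

/-- Cyclotomic number `(i, j)` with respect to generator `g` and divisor `ℓ`. -/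
noncomputable def cyc {F : Type*} [Field F] [Fintype F] (g : Fˣ) (ℓ : ℕ) (i j : ℤ) : ℕ :=
  Nat.card {x : F // (∃ y : Fˣ, x = 1 + ((g ^ i * y ^ ℓ : Fˣ) : F)) ∧
    ∃ z : Fˣ, x = ((g ^ j * z ^ ℓ : Fˣ) : F)}

namespace CycAux5
open CycAux CycAux2 CycAux3 CycAux4

variable {F : Type*} [Field F] [Fintype F]

lemma cyc_eq_card (g : Fˣ) (ℓ : ℕ) (i j : ℤ) : cyc g ℓ i j = (Aset g ℓ i j).card := by
  classical
  rw [cyc, Nat.card_eq_fintype_card, Fintype.card_subtype]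
  congr 1


end CycAux5

theorem sum_sq_cyc {F : Type*} [Field F] [Fintype F] (g : Fˣ) (ℓ : ℕ)
    (hg : ∀ x : Fˣ, x ∈ Subgroup.zpowers g)
    (hodd : Odd (Fintype.card F)) (hℓ : ℓ ∣ Fintype.card F - 1)
    (k : ℕ) (hk : k = (Fintype.card F - 1) / ℓ) :
    ∑ i ∈ Finset.range ℓ, ∑ j ∈ Finset.range ℓ, (cyc g ℓ (i : ℤ) (j : ℤ) : ℤ) ^ 2 =
      (Fintype.card F : ℤ) + k * (k - 3) := by
  classical
  obtain ⟨c, hc⟩ := hodd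
  have hq2 : 2 ≤ Fintype.card F := Fintype.one_lt_card
  have hq3 : 3 ≤ Fintype.card F := by omega
  have hℓ0 : 0 < ℓ := by
    rcases Nat.eq_zero_or_pos ℓ with h | h
    · subst h; rw [Nat.zero_dvd] at hℓ; omega
    · exact h
  have hk1 : 1 ≤ k := by
    rw [hk]; exact Nat.div_pos (Nat.le_of_dvd (by omega) hℓ) hℓ0
  -- the sum equals the cardinality of Sfin
  have key : (CycAux2.Sfin F ℓ).card =
      ∑ i ∈ Finset.range ℓ, ∑ j ∈ Finset.range ℓ, (cyc g ℓ (i : ℤ) (j : ℤ)) ^ 2 := by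
    rw [CycAux3.Sfin_eq_biUnion g ℓ hg hℓ hℓ0,
      Finset.card_biUnion (CycAux3.blocks_disjoint g ℓ hg hℓ), Finset.sum_product]
    exact Finset.sum_congr rfl fun i _ => Finset.sum_congr rfl fun j _ => by
      rw [Finset.card_product, CycAux5.cyc_eq_card, sq]
  -- the cardinality of Sfin
  have hsplit := Finset.card_filter_add_card_filter_not
    (s := CycAux2.Sfin F ℓ) (fun p => p.1 = p.2)
  rw [CycAux4.card_Sdiag ℓ, CycAux4.card_Soff ℓ, Finset.offDiag_card,
    Finset.card_erase_of_mem (CycAux2.one_mem_KF ℓ), CycAux2.card_KF g ℓ hg hℓ, ← hk] at hsplit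
  -- now conclude
  have hcast : (∑ i ∈ Finset.range ℓ, ∑ j ∈ Finset.range ℓ, (cyc g ℓ (i : ℤ) (j : ℤ) : ℤ) ^ 2)
      = ((∑ i ∈ Finset.range ℓ, ∑ j ∈ Finset.range ℓ, (cyc g ℓ (i : ℤ) (j : ℤ)) ^ 2 : ℕ) : ℤ) := by
    push_cast
    rfl
  rw [hcast, ← key]
  -- hsplit : (q - 2) + ((k-1)*(k-1) - (k-1)) = Sfin.card
  set m := k - 1 with hm
  have hkm : k = m + 1 := by omega
  have hcard : (CycAux2.Sfin F ℓ).card = (Fintype.card F - 2) + (m * m - m) := by omega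
  rw [hcard]
  have h1 : ((Fintype.card F - 2 : ℕ) : ℤ) = (Fintype.card F : ℤ) - 2 := by
    have := hq2; push_cast [Nat.cast_sub (by omega : 2 ≤ Fintype.card F)]; ring
  have h2 : ((m * m - m : ℕ) : ℤ) = (m : ℤ) * m - m := by
    rcases Nat.eq_zero_or_pos m with h | h
    · rw [h]; simp
    · push_cast [Nat.cast_sub (Nat.le_mul_of_pos_left m h)]; ring
  push_cast [h1, h2]
  have hk' : (k : ℤ) = (m : ℤ) + 1 := by exact_mod_cast congrArg (Nat.cast : ℕ → ℤ) hkm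
  rw [hk']
  ring
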